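/- For every n ≥ 2 there is a constant c_n > 0 depending only on n such that for every finite field F, every Besicovitch set E ⊆ F^n satisfies |E| ≥ c_n |F|^{(n+2)/2}. -/

import Mathlib

open scoped BigOperators

/-- The line `l(x₀, v) = {(x₀ + t v, t) : t ∈ F} ⊆ F^m × F`. -/
def lineSet {F : Type*} [Field F] {m : ℕ} (x₀ v : Fin m → F) : Set ((Fin m → F) × F) :=
  {p | ∃ t : F, p = (x₀ + t • v, t)}

/-- A Besicovitch set in `F^m × F = F^{m+1}`: a set containing a line in every direction. -/
def IsBesicovitch {F : Type*} [Field F] {m : ℕ} (E : Set ((Fin m → F) × F)) : Prop :=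
  ∀ v : Fin m → F, ∃ x₀ : Fin m → F, lineSet x₀ v ⊆ E

namespace KakeyaAux

open Polynomial

/-- Coefficient of a product at the top degree. -/
theorem coeff_mul_of_natDegree_le' {R : Type*} [CommSemiring R] {p q : R[X]} {a b : ℕ}
    (hp : p.natDegree ≤ a) (hq : q.natDegree ≤ b) :
    (p * q).coeff (a + b) = p.coeff a * q.coeff b := by
  rw [coeff_mul, Finset.sum_eq_single (a, b)]
  · intro x hx hne
    have hx' : x.1 + x.2 = a + b := Finset.HasAntidiagonal.mem_antidiagonal.mp hx
    rcases lt_or_ge a x.1 with h | h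
    · rw [coeff_eq_zero_of_natDegree_lt (lt_of_le_of_lt hp h), zero_mul]
    · have hbx : b ≤ x.2 := by omega
      have : x.2 ≠ b := by
        intro hb
        apply hne
        have : x.1 = a := by omega
        exact Prod.ext this hb
      have : b < x.2 := lt_of_le_of_ne hbx (Ne.symm this)
      rw [coeff_eq_zero_of_natDegree_lt (lt_of_le_of_lt hq this), mul_zero]
  · intro h
    exact absurd (Finset.HasAntidiagonal.mem_antidiagonal.mpr (rfl : (a, b).1 + (a, b).2 = a + b)) h

theorem coeff_prod_sum {R : Type*} [CommSemiring R] {ι : Type*} (s : Finset ι)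
    (f : ι → R[X]) (d : ι → ℕ) (h : ∀ i ∈ s, (f i).natDegree ≤ d i) :
    (∏ i ∈ s, f i).coeff (∑ i ∈ s, d i) = ∏ i ∈ s, (f i).coeff (d i) := by
  induction s using Finset.cons_induction with
  | empty => simp
  | cons a s ha ih =>
    rw [Finset.prod_cons, Finset.sum_cons, Finset.prod_cons, ← ih
      (fun i hi => h i (Finset.mem_cons_of_mem hi)),
      coeff_mul_of_natDegree_le' (h a (Finset.mem_cons_self a s))
        ((natDegree_prod_le _ _).trans
          (Finset.sum_le_sum fun i hi => h i (Finset.mem_cons_of_mem hi)))]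

theorem natDegree_linear_le {R : Type*} [CommSemiring R] (a b : R) :
    (C a + C b * X : R[X]).natDegree ≤ 1 := by
  refine (natDegree_add_le _ _).trans (max_le ?_ ?_)
  · rw [natDegree_C]; omega
  · exact (natDegree_C_mul_le _ _).trans natDegree_X_le

theorem coeff_linear_one {R : Type*} [CommSemiring R] (a b : R) :
    (C a + C b * X : R[X]).coeff 1 = b := by
  simp [coeff_C]

theorem coeff_linear_pow {R : Type*} [CommSemiring R] (a b : R) (k : ℕ) :
    ((C a + C b * X : R[X]) ^ k).coeff k = b ^ k := by
  have h := coeff_prod_sum (Finset.range k) (fun _ => (C a + C b * X : R[X]))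
    (fun _ => 1) (fun i _ => natDegree_linear_le a b)
  simpa [Finset.prod_const, coeff_linear_one] using h

section LineComp

variable {F : Type*} [CommSemiring F] {σ : Type*}

/-- The univariate polynomial `t ↦ p (a + t • w)`. -/
noncomputable def lineComp (a w : σ → F) (p : MvPolynomial σ F) : F[X] :=
  MvPolynomial.eval₂ C (fun i => C (a i) + C (w i) * X) p

theorem eval_lineComp (a w : σ → F) (p : MvPolynomial σ F) (t : F) :
    (lineComp a w p).eval t = MvPolynomial.eval (fun i => a i + w i * t) p := by
  have h := MvPolynomial.eval₂_comp_left (Polynomial.evalRingHom t)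
    (Polynomial.C : F →+* F[X]) (fun i => C (a i) + C (w i) * X) p
  have hC : (Polynomial.evalRingHom t).comp (Polynomial.C : F →+* F[X]) = RingHom.id F := by
    ext x; simp
  rw [hC] at h
  have hg : ((Polynomial.evalRingHom t) ∘ fun i => C (a i) + C (w i) * X)
      = fun i => a i + w i * t := by
    funext i; simp
  rw [hg] at h
  rw [lineComp]
  rw [show ((MvPolynomial.eval₂ C (fun i => C (a i) + C (w i) * X) p).eval t)
    = (Polynomial.evalRingHom t) (MvPolynomial.eval₂ C (fun i => C (a i) + C (w i) * X) p)
    from rfl, h, MvPolynomial.eval₂_id]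

theorem natDegree_lineComp_le (a w : σ → F) (p : MvPolynomial σ F) :
    (lineComp a w p).natDegree ≤ p.totalDegree := by
  rw [lineComp, MvPolynomial.eval₂_eq]
  apply natDegree_sum_le_of_forall_le
  intro α hα
  refine (natDegree_mul_le).trans ?_
  rw [natDegree_C, zero_add]
  refine (natDegree_prod_le _ _).trans ?_
  refine le_trans ?_ (MvPolynomial.le_totalDegree hα)
  rw [Finsupp.sum]
  apply Finset.sum_le_sum
  intro i _
  refine (natDegree_pow_le).trans ?_
  calc α i * (C (a i) + C (w i) * X : F[X]).natDegree ≤ α i * 1 :=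
        Nat.mul_le_mul_left _ (natDegree_linear_le _ _)
    _ = α i := mul_one _

theorem coeff_lineComp (a w : σ → F) (p : MvPolynomial σ F) {d : ℕ}
    (hd : p.totalDegree ≤ d) :
    (lineComp a w p).coeff d =
      MvPolynomial.eval w (MvPolynomial.homogeneousComponent d p) := by
  classical
  rw [lineComp, MvPolynomial.eval₂_eq, finset_sum_coeff,
    MvPolynomial.homogeneousComponent_apply, map_sum, Finset.sum_filter]
  refine Finset.sum_congr rfl fun α hα => ?_
  have hsum : (α.sum fun _ e => e) = ∑ i ∈ α.support, α i := rfl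
  have hdegsum : α.degree = ∑ i ∈ α.support, α i := rfl
  by_cases hαd : α.degree = d
  · rw [if_pos hαd, coeff_C_mul, MvPolynomial.eval_monomial]
    congr 1
    rw [show d = ∑ i ∈ α.support, α i from hdegsum ▸ hαd.symm]
    rw [coeff_prod_sum _ _ _ (fun i _ => (natDegree_pow_le).trans
      (by simpa using Nat.mul_le_mul_left (α i) (natDegree_linear_le (a i) (w i))))]
    rw [Finsupp.prod]
    exact Finset.prod_congr rfl fun i _ => coeff_linear_pow _ _ _
  · rw [if_neg hαd, coeff_C_mul, coeff_eq_zero_of_natDegree_lt, mul_zero]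
    have hlt : α.degree < d := by
      refine lt_of_le_of_ne ?_ hαd
      rw [hdegsum, ← hsum]
      exact (MvPolynomial.le_totalDegree hα).trans hd
    refine lt_of_le_of_lt ?_ hlt
    refine (natDegree_prod_le _ _).trans ?_
    rw [hdegsum]
    apply Finset.sum_le_sum
    intro i _
    refine (natDegree_pow_le).trans ?_
    simpa using Nat.mul_le_mul_left (α i) (natDegree_linear_le (a i) (w i))

end LineComp

theorem eval_smul_of_isHomogeneous {F : Type*} [CommSemiring F] {σ : Type*}
    (Q : MvPolynomial σ F) {d : ℕ} (hQ : Q.IsHomogeneous d) (c : F) (w : σ → F) :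
    MvPolynomial.eval (fun i => c * w i) Q = c ^ d * MvPolynomial.eval w Q := by
  rw [MvPolynomial.eval_eq, MvPolynomial.eval_eq, Finset.mul_sum]
  refine Finset.sum_congr rfl fun α hα => ?_
  have hdeg : ∑ i ∈ α.support, α i = d := by
    have h := hQ (MvPolynomial.mem_support_iff.mp hα)
    rw [Pi.one_def, ← Finsupp.degree_eq_weight_one] at h
    exact h
  simp_rw [mul_pow]
  rw [Finset.prod_mul_distrib, Finset.prod_pow_eq_pow_sum, hdeg]
  ring

/-- Dvir's theorem core: a polynomial of total degree `≤ q - 2` vanishing on a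
Besicovitch set is zero. -/
theorem dvir {F : Type} [Field F] [Fintype F] {m : ℕ} (E : Set ((Fin m → F) × F))
    (hE : IsBesicovitch E) (p : MvPolynomial (Fin m ⊕ Unit) F)
    (hdeg : p.totalDegree ≤ Fintype.card F - 2)
    (hvan : ∀ z ∈ E, MvPolynomial.eval (Sum.elim z.1 fun _ => z.2) p = 0) : p = 0 := by
  classical
  by_contra hp
  set q := Fintype.card F with hq
  have hq2 : 2 ≤ q := Fintype.one_lt_card
  set d := p.totalDegree with hd
  set Q := MvPolynomial.homogeneousComponent d p with hQdef
  have hQhom : Q.IsHomogeneous d := MvPolynomial.homogeneousComponent_isHomogeneous d p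
  have hQdeg : Q.totalDegree ≤ d := by
    rw [MvPolynomial.totalDegree]
    apply Finset.sup_le
    intro α hα
    have h := hQhom (MvPolynomial.mem_support_iff.mp hα)
    rw [Pi.one_def, ← Finsupp.degree_eq_weight_one] at h
    exact le_of_eq h
  -- Q is nonzero
  have hQne : Q ≠ 0 := by
    obtain ⟨α, hα, hαd⟩ := Finset.exists_mem_eq_sup p.support
      (MvPolynomial.support_nonempty.mpr hp) (fun s => s.sum fun _ e => e)
    intro h0
    have hcoeff : MvPolynomial.coeff α Q = MvPolynomial.coeff α p := by
      rw [hQdef, MvPolynomial.coeff_homogeneousComponent, if_pos]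
      show α.degree = d
      exact hαd.symm
    rw [h0, MvPolynomial.coeff_zero] at hcoeff
    exact (MvPolynomial.mem_support_iff.mp hα) hcoeff.symm
  -- Step 2: Q vanishes at (v, 1) for every direction v
  have hstep2 : ∀ v : Fin m → F,
      MvPolynomial.eval (Sum.elim v fun _ => (1 : F)) Q = 0 := by
    intro v
    obtain ⟨x₀, hx₀⟩ := hE v
    set a : (Fin m ⊕ Unit) → F := Sum.elim x₀ (fun _ => 0) with ha
    set w : (Fin m ⊕ Unit) → F := Sum.elim v (fun _ => 1) with hw
    have hf0 : lineComp a w p = 0 := by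
      apply Polynomial.eq_zero_of_natDegree_lt_card_of_eval_eq_zero' _ Finset.univ
      · intro t _
        rw [eval_lineComp]
        have hmem : ((x₀ + t • v, t) : (Fin m → F) × F) ∈ E := hx₀ ⟨t, rfl⟩
        have h := hvan _ hmem
        have hfun : (fun i => a i + w i * t)
            = Sum.elim (x₀ + t • v) (fun _ => t) := by
          funext i
          cases i with
          | inl j => simp [ha, hw]; ring
          | inr u => simp [ha, hw]
        rw [hfun]
        exact h
      · rw [Finset.card_univ]
        calc (lineComp a w p).natDegree ≤ p.totalDegree := natDegree_lineComp_le a w p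
          _ ≤ q - 2 := hdeg
          _ < q := by omega
    have h := coeff_lineComp a w p (le_refl d)
    rw [hf0, Polynomial.coeff_zero] at h
    exact h.symm
  -- Step 3: Q vanishes everywhere
  have hstep3 : ∀ x : (Fin m ⊕ Unit) → F, MvPolynomial.eval x Q = 0 := by
    have hne0 : ∀ (v : Fin m → F) (s : F), s ≠ 0 →
        MvPolynomial.eval (Sum.elim v fun _ => s) Q = 0 := by
      intro v s hs
      have hfun : (Sum.elim v (fun _ : Unit => s))
          = fun i : Fin m ⊕ Unit =>
            s * (Sum.elim (fun j => s⁻¹ * v j) (fun _ : Unit => (1 : F))) i := by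
        funext i
        cases i with
        | inl j => simp [mul_inv_cancel_left₀ hs]
        | inr u => simp
      rw [hfun, eval_smul_of_isHomogeneous Q hQhom s _, hstep2 _, mul_zero]
    intro x
    set v : Fin m → F := fun j => x (Sum.inl j) with hv
    set t : F := x (Sum.inr ()) with htdef
    have hx : x = Sum.elim v (fun _ => t) := by
      funext i
      cases i with
      | inl j => rfl
      | inr u => cases u; rfl
    rw [hx]
    by_cases ht : t = 0
    · set b : (Fin m ⊕ Unit) → F := Sum.elim v (fun _ => 0) with hb
      set u : (Fin m ⊕ Unit) → F := Sum.elim (fun _ => 0) (fun _ => 1) with hu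
      have hg : lineComp b u Q = 0 := by
        apply Polynomial.eq_zero_of_natDegree_lt_card_of_eval_eq_zero' _
          (Finset.univ.erase (0 : F))
        · intro s hs
          rw [eval_lineComp]
          have hs0 : s ≠ 0 := (Finset.mem_erase.mp hs).1
          have hfun : (fun i => b i + u i * s) = Sum.elim v (fun _ => s) := by
            funext i
            cases i with
            | inl j => simp [hb, hu]
            | inr w => simp [hb, hu]
          rw [hfun]
          exact hne0 v s hs0
        · rw [Finset.card_erase_of_mem (Finset.mem_univ 0), Finset.card_univ]
          calc (lineComp b u Q).natDegree ≤ Q.totalDegree := natDegree_lineComp_le b u Q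
            _ ≤ d := hQdeg
            _ ≤ q - 2 := hdeg
            _ < q - 1 := by omega
      have h := eval_lineComp b u Q 0
      rw [hg] at h
      have hfun : (fun i => b i + u i * 0) = Sum.elim v (fun _ => t) := by
        funext i
        cases i with
        | inl j => simp [hb, hu]
        | inr w => simp [hb, hu, ht]
      rw [hfun] at h
      simpa using h.symm
    · exact hne0 v t ht
  -- conclude Q = 0, contradiction
  apply hQne
  apply MvPolynomial.eq_zero_of_eval_eq_zero _ _ Q hstep3
  apply MvPolynomial.restrictTotalDegree_le_restrictDegree
  rw [MvPolynomial.mem_restrictTotalDegree]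
  calc Q.totalDegree ≤ d := hQdeg
    _ ≤ q - 2 := hdeg
    _ ≤ q - 1 := by omega

end KakeyaAux

/-- Besicovitch sets in `F^n` (here `n = m + 1 ≥ 2`) have cardinality `≳ |F|^{(n+2)/2}`;
note `(n + 2) / 2 = (m + 3) / 2`. -/
theorem statement15 (m : ℕ) (hm : 1 ≤ m) :
    ∃ c : ℝ, 0 < c ∧ ∀ (F : Type) [Field F] [Fintype F],
      ∀ E : Set ((Fin m → F) × F), IsBesicovitch E →
        c * (Fintype.card F : ℝ) ^ (((m : ℝ) + 3) / 2) ≤ Nat.card E := by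
  classical
  refine ⟨((2 * (m + 1) : ℝ))⁻¹ ^ (m + 1), by positivity, ?_⟩
  intro F _ _ E hE
  set q := Fintype.card F with hq
  have hq2 : 2 ≤ q := Fintype.one_lt_card
  set k := (q - 2) / (m + 1) with hk
  -- main cardinality bound via Dvir's argument
  have hcard : (k + 1) ^ (m + 1) ≤ Nat.card E := by
    by_contra hlt
    push_neg at hlt
    haveI : Fintype E := Fintype.ofFinite E
    rw [Nat.card_eq_fintype_card] at hlt
    set V := MvPolynomial.restrictTotalDegree (Fin m ⊕ Unit) F (q - 2) with hV
    let wz : E → ((Fin m ⊕ Unit) → F) := fun z => Sum.elim z.1.1 (fun _ => z.1.2)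
    let L : V →ₗ[F] (E → F) :=
      { toFun := fun p z => MvPolynomial.eval (wz z) (p : MvPolynomial (Fin m ⊕ Unit) F)
        map_add' := fun p p' => by funext z; simp
        map_smul' := fun c p => by funext z; simp [MvPolynomial.smul_eval] }
    -- lower bound on the dimension of V
    have hrank : (k + 1) ^ (m + 1) ≤ Module.finrank F V := by
      have hinj : Function.Injective
          (fun g : (Fin m ⊕ Unit) → Fin (k + 1) =>
            (Finsupp.equivFunOnFinite.symm fun i => ((g i : ℕ)))) := by
        intro g g' hgg'
        have h := Finsupp.equivFunOnFinite.symm.injective hgg'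
        funext i
        exact Fin.val_injective (congrFun h i)
      have hmem : ∀ g : (Fin m ⊕ Unit) → Fin (k + 1),
          (MvPolynomial.monomial (Finsupp.equivFunOnFinite.symm fun i => ((g i : ℕ)))
            (1 : F)) ∈ V := by
        intro g
        rw [hV, MvPolynomial.mem_restrictTotalDegree,
          MvPolynomial.totalDegree_monomial _ one_ne_zero]
        have h1 : ((Finsupp.equivFunOnFinite.symm fun i => ((g i : ℕ))).sum fun _ e => e)
            = ∑ i : (Fin m ⊕ Unit), (g i : ℕ) := by
          rw [Finsupp.sum_fintype]
          · rfl
          · intro i; rfl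
        rw [h1]
        calc ∑ i : (Fin m ⊕ Unit), (g i : ℕ) ≤ ∑ _i : (Fin m ⊕ Unit), k :=
              Finset.sum_le_sum fun i _ => Nat.lt_succ_iff.mp (g i).isLt
          _ = (m + 1) * k := by
              rw [Finset.sum_const, Finset.card_univ, Fintype.card_sum, smul_eq_mul]
              simp
          _ ≤ q - 2 := by rw [hk, mul_comm]; exact Nat.div_mul_le_self _ _
      let b : ((Fin m ⊕ Unit) → Fin (k + 1)) → V := fun g =>
        ⟨MvPolynomial.monomial (Finsupp.equivFunOnFinite.symm fun i => ((g i : ℕ))) 1,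
          hmem g⟩
      have hli : LinearIndependent F b := by
        apply LinearIndependent.of_comp V.subtype
        have h := (MvPolynomial.basisMonomials (Fin m ⊕ Unit) F).linearIndependent.comp
          _ hinj
        convert h using 1
        funext g
        simp [b, MvPolynomial.coe_basisMonomials]
      have h := hli.fintype_card_le_finrank
      calc (k + 1) ^ (m + 1) = Fintype.card ((Fin m ⊕ Unit) → Fin (k + 1)) := by
            simp [Fintype.card_fun, Fintype.card_sum]
        _ ≤ Module.finrank F V := h
    -- L cannot be injective
    have hninj : ¬ Function.Injective L := by
      intro hinjL
      have h := LinearMap.finrank_le_finrank_of_injective hinjL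
      rw [Module.finrank_fintype_fun_eq_card] at h
      omega
    obtain ⟨x, y, hfxy, hne⟩ := Function.not_injective_iff.mp hninj
    have hp0 : (x - y : V) ≠ 0 := sub_ne_zero.mpr hne
    have hLp : L (x - y) = 0 := by rw [map_sub, hfxy, sub_self]
    have hvan : ∀ z ∈ E, MvPolynomial.eval (Sum.elim z.1 fun _ => z.2)
        ((x - y : V) : MvPolynomial (Fin m ⊕ Unit) F) = 0 := by
      intro z hz
      exact congrFun hLp ⟨z, hz⟩
    have hzero := KakeyaAux.dvir E hE _
      ((MvPolynomial.mem_restrictTotalDegree _ _ _).mp (x - y).2) hvan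
    exact hp0 (Subtype.ext hzero)
  -- real arithmetic
  have hq1 : (1 : ℝ) ≤ (q : ℝ) := by exact_mod_cast le_trans one_le_two hq2
  have hkq : (q : ℝ) ≤ 2 * (m + 1) * (k + 1) := by
    have hnat : q ≤ 2 * (m + 1) * (k + 1) := by
      have hdm := Nat.div_add_mod (q - 2) (m + 1)
      have hmod := Nat.mod_lt (q - 2) (show 0 < m + 1 by omega)
      rw [← hk] at hdm
      have h1 : (m + 1) * (k + 1) = (m + 1) * k + (m + 1) := by ring
      have h2 : 2 * (m + 1) * (k + 1) = 2 * ((m + 1) * (k + 1)) := by ring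
      omega
    exact_mod_cast hnat
  have hexp : (q : ℝ) ^ (((m : ℝ) + 3) / 2) ≤ (q : ℝ) ^ ((m : ℝ) + 1) := by
    apply Real.rpow_le_rpow_of_exponent_le hq1
    have : (1 : ℝ) ≤ (m : ℝ) := by exact_mod_cast hm
    linarith
  have hpow : (q : ℝ) ^ ((m : ℝ) + 1) = (q : ℝ) ^ (m + 1 : ℕ) := by
    rw [← Real.rpow_natCast (q : ℝ) (m + 1)]
    norm_num
  have hfinal : ((2 * ((m : ℝ) + 1))⁻¹) ^ (m + 1) * (q : ℝ) ^ (m + 1 : ℕ)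
      ≤ ((k : ℝ) + 1) ^ (m + 1) := by
    rw [← mul_pow]
    apply pow_le_pow_left₀
    · positivity
    · rw [inv_mul_eq_div, div_le_iff₀ (by positivity)]
      calc (q : ℝ) ≤ 2 * (m + 1) * (k + 1) := hkq
        _ = ((k : ℝ) + 1) * (2 * ((m : ℝ) + 1)) := by ring
  have hE' : (((k + 1) ^ (m + 1) : ℕ) : ℝ) ≤ (Nat.card E : ℝ) := by exact_mod_cast hcard
  calc ((2 * ((m : ℝ) + 1))⁻¹) ^ (m + 1) * (q : ℝ) ^ (((m : ℝ) + 3) / 2)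
      ≤ ((2 * ((m : ℝ) + 1))⁻¹) ^ (m + 1) * (q : ℝ) ^ ((m : ℝ) + 1) := by
        apply mul_le_mul_of_nonneg_left hexp
        positivity
    _ = ((2 * ((m : ℝ) + 1))⁻¹) ^ (m + 1) * (q : ℝ) ^ (m + 1 : ℕ) := by rw [hpow]
    _ ≤ ((k : ℝ) + 1) ^ (m + 1) := hfinal
    _ ≤ (Nat.card E : ℝ) := by
        rw [show ((k : ℝ) + 1) ^ (m + 1) = (((k + 1) ^ (m + 1) : ℕ) : ℝ) by push_cast; ring]
        exact hE'
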